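/- Let A ⊆ Θ be a measurable set such that the set of densities {p_θ : θ ∈ A} is convex and closed in L¹(μ), let 0 < α < 1, and let c ≥ 0 be such that inf_{θ ∈ A} [−log ∫ (p_θ(x)/p*(x))^α p₀(x) dμ(x)] ≥ c. Suppose 0 < ∫_A R_n(θ) dΠ(θ) < ∞ (for a fixed realization of X₁, …, X_n), and define the predictive density p_{nA}(x) = ∫_A p_θ(x) R_n(θ) dΠ(θ) / ∫_A R_n(θ) dΠ(θ). Then p_{nA} belongs (as an element of L¹(μ)) to {p_θ : θ ∈ A}, and consequently ∫ (p_{nA}(x)/p*(x))^α p₀(x) dμ(x) ≤ e^{−c}. -/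

import Mathlib

open MeasureTheory ProbabilityTheory Filter Real Set Topology
open scoped ENNReal NNReal
open symmDiff

noncomputable section

variable {X : Type*} {Θ : Type*}

/-- The likelihood ratio `R_n(θ) = ∏_{i=1}^n p_θ(x_i)/p*(x_i)` along the sample path `xs`. -/
def LR (p : Θ → X → ℝ) (θstar : Θ) (xs : ℕ → X) (n : ℕ) (θ : Θ) : ℝ :=
  ∏ i ∈ Finset.range n, p θ (xs i) / p θstar (xs i)

/-- The posterior mass `Πⁿ(B) = ∫_B R_n dΠ / ∫_Θ R_n dΠ` given the sample path `xs`. -/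
def post [MeasurableSpace Θ] (Pri : Measure Θ) (p : Θ → X → ℝ) (θstar : Θ)
    (xs : ℕ → X) (n : ℕ) (B : Set Θ) : ℝ :=
  (∫ θ in B, LR p θstar xs n θ ∂Pri) / ∫ θ, LR p θstar xs n θ ∂Pri

/-- The predictive density on `A`: `p_{nA}(x) = ∫_A p_θ(x) R_n(θ) dΠ / ∫_A R_n(θ) dΠ`. -/
def predDens [MeasurableSpace Θ] (Pri : Measure Θ) (p : Θ → X → ℝ) (θstar : Θ)
    (xs : ℕ → X) (n : ℕ) (A : Set Θ) (x : X) : ℝ :=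
  (∫ θ in A, p θ x * LR p θstar xs n θ ∂Pri) / ∫ θ in A, LR p θstar xs n θ ∂Pri

/-- The Kullback–Leibler neighborhood `B(ε, θ*; P₀)`. -/
def KLnbhd [MeasurableSpace X] (μ : Measure X) (p : Θ → X → ℝ) (p₀ : X → ℝ)
    (θstar : Θ) (ε : ℝ) : Set Θ :=
  {θ | ∫ x, Real.log (p θstar x / p θ x) * p₀ x ∂μ ≤ ε ^ 2 ∧
       ∫ x, (Real.log (p θstar x / p θ x)) ^ 2 * p₀ x ∂μ ≤ ε ^ 2}

/-- The set of densities `{p_θ : θ ∈ A}` is convex (as a subset of L¹(μ)). -/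
def ConvexDens [MeasurableSpace X] (μ : Measure X) (p : Θ → X → ℝ) (A : Set Θ) : Prop :=
  ∀ θ₁ ∈ A, ∀ θ₂ ∈ A, ∀ t : ℝ, 0 ≤ t → t ≤ 1 →
    ∃ θ ∈ A, (fun x => t * p θ₁ x + (1 - t) * p θ₂ x) =ᵐ[μ] p θ

/-- The set of densities `{p_θ : θ ∈ A}` is closed in L¹(μ): any integrable function that can be
approximated arbitrarily well in L¹ by densities from `A` coincides a.e. with a density from `A`. -/
def ClosedDens [MeasurableSpace X] (μ : Measure X) (p : Θ → X → ℝ) (A : Set Θ) : Prop :=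
  ∀ f : X → ℝ, Integrable f μ →
    (∀ ε > 0, ∃ θ ∈ A, ∫ x, |f x - p θ x| ∂μ < ε) → ∃ θ ∈ A, f =ᵐ[μ] p θ


lemma convexDens_sum [MeasurableSpace X] {μ : Measure X} {p : Θ → X → ℝ} {A : Set Θ}
    (hconv : ConvexDens μ p A) {ι : Type*} (s : Finset ι)
    {w : ι → ℝ} {θs : ι → Θ} (hw : ∀ i, 0 ≤ w i) (hθs : ∀ i, θs i ∈ A)
    (hsum : ∑ i ∈ s, w i = 1) :
    ∃ θ ∈ A, (fun x => ∑ i ∈ s, w i * p (θs i) x) =ᵐ[μ] p θ := by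
  classical
  induction s using Finset.induction generalizing w with
  | empty => simp at hsum
  | @insert a s ha IH =>
    rw [Finset.sum_insert ha] at hsum
    set t := ∑ i ∈ s, w i with hts
    have ht0 : 0 ≤ t := Finset.sum_nonneg fun i _ => hw i
    rcases eq_or_lt_of_le ht0 with ht | ht
    · -- all weights in s vanish
      have hz : ∀ i ∈ s, w i = 0 := by
        intro i hi
        exact (Finset.sum_eq_zero_iff_of_nonneg fun j _ => hw j).1 ht.symm i hi
      have hwa : w a = 1 := by linarith
      refine ⟨θs a, hθs a, Eventually.of_forall fun x => ?_⟩
      show ∑ i ∈ insert a s, w i * p (θs i) x = p (θs a) x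
      rw [Finset.sum_insert ha, Finset.sum_eq_zero (fun i hi => by rw [hz i hi]; ring), hwa]
      ring
    · have hwa1 : w a ≤ 1 := by linarith
      obtain ⟨θ', hθ'A, hθ'⟩ := IH (w := fun i => w i / t) (fun i => div_nonneg (hw i) ht0)
        (by rw [← Finset.sum_div]; field_simp; exact hts.symm)
      obtain ⟨θ, hθA, hθ⟩ := hconv (θs a) (hθs a) θ' hθ'A (w a) (hw a) hwa1
      refine ⟨θ, hθA, ?_⟩
      filter_upwards [hθ', hθ] with x hx1 hx2
      have h1t : 1 - w a = t := by linarith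
      have : ∑ i ∈ s, w i * p (θs i) x = t * p θ' x := by
        rw [← hx1, Finset.mul_sum]
        refine Finset.sum_congr rfl fun i hi => ?_
        field_simp
      show ∑ i ∈ insert a s, w i * p (θs i) x = p θ x
      rw [Finset.sum_insert ha, this, ← h1t, ← hx2]

lemma rect_algebra_structure {Θ X : Type*} [MeasurableSpace Θ] [MeasurableSpace X]
    {t : Set (Θ × X)}
    (ht : t ∈ MeasureTheory.generateSetAlgebra
      (Set.image2 (· ×ˢ ·) {s : Set Θ | MeasurableSet s} {u : Set X | MeasurableSet u})) :
    ∃ (ι : Type) (_ : Fintype ι) (U : ι → Set Θ) (V : ι → Set X),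
      (∀ i, MeasurableSet (U i)) ∧ (∀ i, MeasurableSet (V i)) ∧
      (∀ θ, ∃! i, θ ∈ U i) ∧ t = ⋃ i, (U i) ×ˢ (V i) := by
  induction ht with
  | base s hs =>
      obtain ⟨U₀, hU₀, V₀, hV₀, rfl⟩ := hs
      simp only [Set.mem_setOf_eq] at hU₀ hV₀
      refine ⟨Bool, inferInstance, fun b => if b then U₀ else U₀ᶜ,
        fun b => if b then V₀ else ∅, ?_, ?_, ?_, ?_⟩
      · intro b; cases b <;> simp [hU₀, MeasurableSet.compl hU₀]
      · intro b; cases b <;> simp [hV₀]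
      · intro θ
        by_cases hθ : θ ∈ U₀
        · exact ⟨true, by simpa using hθ, fun b hb => by cases b <;> simp_all⟩
        · exact ⟨false, by simpa using hθ, fun b hb => by cases b <;> simp_all⟩
      · ext ⟨θ, x⟩
        simp only [Set.mem_iUnion, Set.mem_prod]
        constructor
        · rintro ⟨hθ, hx⟩; exact ⟨true, by simpa using hθ, by simpa using hx⟩
        · rintro ⟨b, hθ, hx⟩; cases b <;> simp_all
  | empty =>
      refine ⟨Unit, inferInstance, fun _ => Set.univ, fun _ => ∅, fun _ => .univ,
        fun _ => .empty, fun θ => ⟨(), trivial, fun _ _ => rfl⟩, by simp⟩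
  | compl s hs IH =>
      obtain ⟨ι, _, U, V, hU, hV, huniq, rfl⟩ := IH
      refine ⟨ι, ‹_›, U, fun i => (V i)ᶜ, hU, fun i => (hV i).compl, huniq, ?_⟩
      ext ⟨θ, x⟩
      obtain ⟨i₀, hi₀, hui₀⟩ := huniq θ
      simp only [Set.mem_compl_iff, Set.mem_iUnion, Set.mem_prod, not_exists, not_and]
      constructor
      · intro h; exact ⟨i₀, hi₀, h i₀ hi₀⟩
      · rintro ⟨i, hθ, hx⟩ j hj hxj
        have : j = i₀ := hui₀ j hj
        have : i = i₀ := hui₀ i hθ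
        subst this; simp_all
  | union s u hs hu IHs IHu =>
      obtain ⟨ι, _, U, V, hU, hV, huniq, rfl⟩ := IHs
      obtain ⟨ι', _, U', V', hU', hV', huniq', rfl⟩ := IHu
      refine ⟨ι × ι', inferInstance, fun ij => U ij.1 ∩ U' ij.2,
        fun ij => V ij.1 ∪ V' ij.2, fun ij => (hU ij.1).inter (hU' ij.2),
        fun ij => (hV ij.1).union (hV' ij.2), ?_, ?_⟩
      · intro θ
        obtain ⟨i₀, hi₀, hui₀⟩ := huniq θ
        obtain ⟨j₀, hj₀, huj₀⟩ := huniq' θ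
        exact ⟨(i₀, j₀), ⟨hi₀, hj₀⟩, fun ij hij =>
          Prod.ext (hui₀ ij.1 hij.1) (huj₀ ij.2 hij.2)⟩
      · ext ⟨θ, x⟩
        obtain ⟨i₀, hi₀, hui₀⟩ := huniq θ
        obtain ⟨j₀, hj₀, huj₀⟩ := huniq' θ
        simp only [Set.mem_union, Set.mem_iUnion, Set.mem_prod, Set.mem_inter_iff]
        constructor
        · rintro (⟨i, hθ, hx⟩ | ⟨j, hθ, hx⟩)
          · exact ⟨(i, j₀), ⟨hθ, hj₀⟩, Or.inl hx⟩
          · exact ⟨(i₀, j), ⟨hi₀, hθ⟩, Or.inr hx⟩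
        · rintro ⟨ij, ⟨hθ1, hθ2⟩, hx | hx⟩
          · exact Or.inl ⟨ij.1, hθ1, hx⟩
          · exact Or.inr ⟨ij.2, hθ2, hx⟩


/-- A "good kernel": a jointly defined function which is, in the first variable, simple over a
finite measurable partition, with integrable measurable pieces. -/
def GoodKernel {Θ X : Type*} [MeasurableSpace Θ] [MeasurableSpace X] (μ : Measure X)
    (g : Θ × X → ℝ) : Prop :=
  ∃ (ι : Type) (_ : Fintype ι) (U : ι → Set Θ) (h : ι → X → ℝ),
    (∀ i, MeasurableSet (U i)) ∧ (∀ i, Measurable (h i)) ∧ (∀ i, Integrable (h i) μ) ∧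
    (∀ θ, ∃! i, θ ∈ U i) ∧ (∀ i, ∀ θ ∈ U i, ∀ x, g (θ, x) = h i x)

lemma GoodKernel.zero {Θ X : Type*} [MeasurableSpace Θ] [MeasurableSpace X] (μ : Measure X) :
    GoodKernel μ (0 : Θ × X → ℝ) :=
  ⟨Unit, inferInstance, fun _ => Set.univ, fun _ => 0, fun _ => .univ, fun _ => measurable_const,
    fun _ => integrable_zero _ _ _, fun _ => ⟨(), trivial, fun _ _ => rfl⟩,
    fun _ _ _ _ => rfl⟩

lemma GoodKernel.add {Θ X : Type*} [MeasurableSpace Θ] [MeasurableSpace X] {μ : Measure X}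
    {g₁ g₂ : Θ × X → ℝ} (h₁ : GoodKernel μ g₁) (h₂ : GoodKernel μ g₂) :
    GoodKernel μ (g₁ + g₂) := by
  obtain ⟨ι, _, U, h, hU, hmeas, hint, huniq, hrep⟩ := h₁
  obtain ⟨ι', _, U', h', hU', hmeas', hint', huniq', hrep'⟩ := h₂
  refine ⟨ι × ι', inferInstance, fun ij => U ij.1 ∩ U' ij.2, fun ij => h ij.1 + h' ij.2,
    fun ij => (hU ij.1).inter (hU' ij.2), fun ij => (hmeas ij.1).add (hmeas' ij.2),
    fun ij => (hint ij.1).add (hint' ij.2), ?_, ?_⟩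
  · intro θ
    obtain ⟨i₀, hi₀, hui₀⟩ := huniq θ
    obtain ⟨j₀, hj₀, huj₀⟩ := huniq' θ
    exact ⟨(i₀, j₀), ⟨hi₀, hj₀⟩, fun ij hij => Prod.ext (hui₀ ij.1 hij.1) (huj₀ ij.2 hij.2)⟩
  · rintro ij θ ⟨hθ1, hθ2⟩ x
    simp only [Pi.add_apply, hrep ij.1 θ hθ1 x, hrep' ij.2 θ hθ2 x]

lemma GoodKernel.measurable {Θ X : Type*} [MeasurableSpace Θ] [MeasurableSpace X] {μ : Measure X}
    {g : Θ × X → ℝ} (hg : GoodKernel μ g) : Measurable g := by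
  classical
  obtain ⟨ι, _, U, h, hU, hmeas, hint, huniq, hrep⟩ := hg
  have : g = fun z => ∑ i, ((U i ×ˢ (Set.univ : Set X)).indicator (fun w => h i w.2) z) := by
    funext z
    obtain ⟨i₀, hi₀, hui₀⟩ := huniq z.1
    rw [Finset.sum_eq_single i₀]
    · rw [Set.indicator_of_mem (by exact ⟨hi₀, trivial⟩), hrep i₀ z.1 hi₀ z.2]
    · intro j _ hj
      refine Set.indicator_of_notMem (fun hmem => hj ?_) _
      exact hui₀ j hmem.1
    · intro habs; exact absurd (Finset.mem_univ i₀) habs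
  rw [this]
  exact Finset.measurable_sum _ fun i _ =>
    ((hmeas i).comp measurable_snd).indicator ((hU i).prod .univ)

/-- Good kernels are dense in L¹ of a product measure. -/
lemma goodKernel_dense {Θ X : Type*} [MeasurableSpace Θ] [MeasurableSpace X]
    (ρ : Measure Θ) [IsFiniteMeasure ρ] (μ : Measure X) [SigmaFinite μ]
    {q : Θ × X → ℝ} (hq : Integrable q (ρ.prod μ)) {ε : ℝ} (hε : 0 < ε) :
    ∃ g : Θ × X → ℝ, GoodKernel μ g ∧ Integrable g (ρ.prod μ) ∧
      ∫ z, |q z - g z| ∂(ρ.prod μ) ≤ ε := by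
  classical
  set pm := ρ.prod μ with hpm
  -- the algebra generated by measurable rectangles is measure-dense
  set ℛ : Set (Set (Θ × X)) :=
    Set.image2 (· ×ˢ ·) {s : Set Θ | MeasurableSet s} {u : Set X | MeasurableSet u} with hℛ
  have halg : IsSetAlgebra (MeasureTheory.generateSetAlgebra ℛ) :=
    isSetAlgebra_generateSetAlgebra
  have hgen : (inferInstance : MeasurableSpace (Θ × X)) =
      MeasurableSpace.generateFrom (MeasureTheory.generateSetAlgebra ℛ) := by
    rw [MeasureTheory.generateFrom_generateSetAlgebra_eq, generateFrom_prod]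
  let S : pm.FiniteSpanningSetsIn (MeasureTheory.generateSetAlgebra ℛ) :=
    { set := fun k => Set.univ ×ˢ spanningSets μ k
      set_mem := fun k => MeasureTheory.self_subset_generateSetAlgebra
        ⟨Set.univ, MeasurableSet.univ, spanningSets μ k, measurableSet_spanningSets μ k, rfl⟩
      finite := fun k => by
        rw [hpm, Measure.prod_prod]
        exact ENNReal.mul_lt_top (measure_lt_top ρ _) (measure_spanningSets_lt_top μ k)
      spanning := by rw [← Set.prod_iUnion, iUnion_spanningSets, Set.univ_prod_univ] }
  have hdense : pm.MeasureDense (MeasureTheory.generateSetAlgebra ℛ) :=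
    Measure.MeasureDense.of_generateFrom_isSetAlgebra_sigmaFinite halg S hgen
  -- induction over integrable functions
  have main : ∀ ⦃f : Θ × X → ℝ⦄, Integrable f pm → ∀ δ : ℝ, 0 < δ →
      ∃ g : Θ × X → ℝ, GoodKernel μ g ∧ Integrable g pm ∧ ∫ z, |f z - g z| ∂pm ≤ δ := by
    refine Integrable.induction
      (P := fun f => ∀ δ : ℝ, 0 < δ →
        ∃ g : Θ × X → ℝ, GoodKernel μ g ∧ Integrable g pm ∧ ∫ z, |f z - g z| ∂pm ≤ δ)
      ?_ ?_ ?_ ?_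
    · -- indicators
      intro c s hs hpms δ hδ
      by_cases hc : c = 0
      · refine ⟨0, GoodKernel.zero μ, integrable_zero _ _ _, ?_⟩
        subst hc
        have h0 : ∫ z, |(s.indicator fun _ => (0:ℝ)) z - (0 : Θ × X → ℝ) z| ∂pm = 0 := by
          simp [Set.indicator_apply]
        rw [h0]
        exact hδ.le
      · have hδc : 0 < δ / |c| := div_pos hδ (abs_pos.2 hc)
        obtain ⟨t, htmem, htfin, htapp⟩ := hdense.fin_meas_approx hs hpms.ne (δ / |c|) hδc
        obtain ⟨ι, _, U, V, hU, hV, huniq, rfl⟩ := rect_algebra_structure htmem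
        set V' : ι → Set X := fun i => if ρ (U i) = 0 then ∅ else V i with hV'def
        have hV'sub : ∀ i, V' i ⊆ V i := fun i => by
          by_cases h : ρ (U i) = 0 <;> simp [hV'def, h]
        have hV'meas : ∀ i, MeasurableSet (V' i) := fun i => by
          by_cases h : ρ (U i) = 0 <;> simp [hV'def, h, hV i]
        set T' : Set (Θ × X) := ⋃ i, U i ×ˢ V' i with hT'def
        have hT'meas : MeasurableSet T' :=
          MeasurableSet.iUnion fun i => (hU i).prod (hV'meas i)
        have hT'sub : T' ⊆ ⋃ i, U i ×ˢ V i :=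
          Set.iUnion_mono fun i => Set.prod_mono_right (hV'sub i)
        have hV'fin : ∀ i, μ (V' i) < ∞ := by
          intro i
          by_cases h : ρ (U i) = 0
          · simp [hV'def, h]
          · simp only [hV'def, if_neg h]
            have hle : ρ (U i) * μ (V i) ≤ pm (⋃ j, U j ×ˢ V j) := by
              rw [hpm, ← Measure.prod_prod]
              exact measure_mono (Set.subset_iUnion (fun j => U j ×ˢ V j) i)
            exact ENNReal.lt_top_of_mul_ne_top_right (hle.trans_lt htfin.lt_top).ne h
        -- the approximating good kernel
        set g : Θ × X → ℝ := T'.indicator fun _ => c with hgdef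
        have hgood : GoodKernel μ g := by
          refine ⟨ι, ‹_›, U, fun i => (V' i).indicator fun _ => c, hU,
            fun i => measurable_const.indicator (hV'meas i),
            fun i => (integrable_indicator_iff (hV'meas i)).2
              (integrableOn_const (hV'fin i).ne), huniq, ?_⟩
          intro i θ hθ x
          show T'.indicator (fun _ => c) (θ, x) = (V' i).indicator (fun _ => c) x
          by_cases hx : x ∈ V' i
          · rw [Set.indicator_of_mem (Set.mem_iUnion.2 ⟨i, Set.mk_mem_prod hθ hx⟩),
              Set.indicator_of_mem hx]
          · rw [Set.indicator_of_notMem hx, Set.indicator_of_notMem]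
            intro hmem
            obtain ⟨j, hθj, hxj⟩ := Set.mem_iUnion.1 hmem
            obtain ⟨i₀, hi₀, hui₀⟩ := huniq θ
            have hji : j = i := (hui₀ j hθj).trans (hui₀ i hθ).symm
            exact hx (hji ▸ hxj)
        have hpmT' : pm T' < ∞ := (measure_mono hT'sub).trans_lt htfin.lt_top
        have hgint : Integrable g pm :=
          (integrable_indicator_iff hT'meas).2 (integrableOn_const hpmT'.ne)
        refine ⟨g, hgood, hgint, ?_⟩
        -- the error is controlled by the measure of the symmetric difference
        have hnull : pm ((⋃ i, U i ×ˢ V i) ∆ T') = 0 := by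
          have h1 : T' \ (⋃ i, U i ×ˢ V i) = ∅ := Set.diff_eq_empty.2 hT'sub
          have h2 : (⋃ i, U i ×ˢ V i) \ T' ⊆ ⋃ i ∈ {i | ρ (U i) = 0}, U i ×ˢ V i := by
            rintro ⟨θ, x⟩ ⟨hmem, hnmem⟩
            obtain ⟨i, hθi, hxi⟩ := Set.mem_iUnion.1 hmem
            refine Set.mem_biUnion ?_ ⟨hθi, hxi⟩
            by_contra hne
            simp only [Set.mem_setOf_eq] at hne
            exact hnmem (Set.mem_iUnion.2 ⟨i, Set.mk_mem_prod hθi (by simp [hV'def, if_neg hne, hxi])⟩)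
          rw [Set.symmDiff_def]
          refine measure_union_null (measure_mono_null h2 ?_) (by rw [h1]; simp)
          refine measure_biUnion_null_iff (Set.to_countable _) |>.2 fun i hi => ?_
          rw [hpm, Measure.prod_prod, hi, zero_mul]
        have hsymm : pm ((s : Set (Θ × X)) ∆ T') < ENNReal.ofReal (δ / |c|) := by
          refine lt_of_le_of_lt ?_ (by simpa using htapp)
          have htri : s ∆ T' ⊆ (s ∆ (⋃ i, U i ×ˢ V i)) ∪ ((⋃ i, U i ×ˢ V i) ∆ T') :=
            symmDiff_triangle s _ T'
          calc pm (s ∆ T') ≤ pm ((s ∆ (⋃ i, U i ×ˢ V i)) ∪ ((⋃ i, U i ×ˢ V i) ∆ T')) :=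
                measure_mono htri
            _ ≤ pm (s ∆ (⋃ i, U i ×ˢ V i)) + pm ((⋃ i, U i ×ˢ V i) ∆ T') := measure_union_le _ _
            _ = pm (s ∆ (⋃ i, U i ×ˢ V i)) := by rw [hnull, add_zero]
        have habs : (fun z => |s.indicator (fun _ => c) z - g z|) =
            (s ∆ T').indicator fun _ => |c| := by
          funext z
          rw [hgdef]
          by_cases hzs : z ∈ s <;> by_cases hzt : z ∈ T' <;>
            simp [Set.indicator_apply, hzs, hzt, Set.mem_symmDiff, abs_sub_comm]
        rw [habs, integral_indicator_const _ (hs.symmDiff hT'meas), smul_eq_mul]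
        have h1 : (pm (s ∆ T')).toReal ≤ δ / |c| :=
          ENNReal.toReal_le_of_le_ofReal hδc.le hsymm.le
        calc (pm (s ∆ T')).toReal * |c| ≤ (δ / |c|) * |c| := by
              apply mul_le_mul_of_nonneg_right h1 (abs_nonneg c)
          _ = δ := div_mul_cancel₀ δ (abs_ne_zero.2 hc)
    · -- addition
      intro f g hdisj hf hg Pf Pg δ hδ
      obtain ⟨gf, hgoodf, hintf, herrf⟩ := Pf (δ / 2) (half_pos hδ)
      obtain ⟨gg, hgoodg, hintg, herrg⟩ := Pg (δ / 2) (half_pos hδ)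
      refine ⟨gf + gg, hgoodf.add hgoodg, hintf.add hintg, ?_⟩
      calc ∫ z, |(f + g) z - (gf + gg) z| ∂pm
          ≤ ∫ z, (|f z - gf z| + |g z - gg z|) ∂pm := by
            refine integral_mono (((hf.add hg).sub (hintf.add hintg)).abs)
              (((hf.sub hintf).abs).add ((hg.sub hintg).abs)) fun z => ?_
            simp only [Pi.add_apply]
            calc |f z + g z - (gf z + gg z)| = |(f z - gf z) + (g z - gg z)| := by ring_nf
              _ ≤ |f z - gf z| + |g z - gg z| := abs_add_le _ _
        _ = (∫ z, |f z - gf z| ∂pm) + ∫ z, |g z - gg z| ∂pm :=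
            integral_add ((hf.sub hintf).abs) ((hg.sub hintg).abs)
        _ ≤ δ / 2 + δ / 2 := add_le_add herrf herrg
        _ = δ := add_halves δ
    · -- closedness
      refine isClosed_of_closure_subset fun f hf => ?_
      intro δ hδ
      obtain ⟨f', hf'S, hdist⟩ := Metric.mem_closure_iff.1 hf (δ / 2) (half_pos hδ)
      obtain ⟨g, hgood, hgint, herr⟩ := hf'S (δ / 2) (half_pos hδ)
      refine ⟨g, hgood, hgint, ?_⟩
      have h1 : Integrable (⇑f) pm := L1.integrable_coeFn f
      have h2 : Integrable (⇑f') pm := L1.integrable_coeFn f'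
      have hdist' : ∫ z, |f z - f' z| ∂pm < δ / 2 := by
        have hdd := L1.dist_eq_integral_dist f f'
        simp only [Real.dist_eq] at hdd
        rw [← hdd]
        have := dist_comm f f'
        linarith
      calc ∫ z, |f z - g z| ∂pm ≤ ∫ z, (|f z - f' z| + |f' z - g z|) ∂pm := by
            refine integral_mono ((h1.sub hgint).abs)
              (((h1.sub h2).abs).add ((h2.sub hgint).abs)) fun z => abs_sub_le _ _ _
        _ = (∫ z, |f z - f' z| ∂pm) + ∫ z, |f' z - g z| ∂pm :=
            integral_add ((h1.sub h2).abs) ((h2.sub hgint).abs)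
        _ ≤ δ / 2 + δ / 2 := add_le_add hdist'.le herr
        _ = δ := add_halves δ
    · -- a.e. congruence
      intro f g hfg hf Pf δ hδ
      obtain ⟨gd, hgood, hgint, herr⟩ := Pf δ hδ
      refine ⟨gd, hgood, hgint, le_trans (le_of_eq ?_) herr⟩
      refine integral_congr_ae ?_
      filter_upwards [hfg] with z hz
      rw [hz]
  exact main hq ε hε

/-- If `{p_θ : θ ∈ A}` is convex and closed in L¹(μ) and
`inf_{θ ∈ A} [-log ∫ (p_θ/p*)^α p₀ dμ] ≥ c`, then the predictive density `p_{nA}` coincides a.e.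
with a density from `A`, and consequently `∫ (p_{nA}/p*)^α p₀ dμ ≤ e^{-c}`. -/
theorem statement_6
    {X Θ : Type*} [MeasurableSpace X] [MeasurableSpace Θ]
    (μ : Measure X) [SigmaFinite μ]
    (Pri : Measure Θ) [IsProbabilityMeasure Pri]
    (p : Θ → X → ℝ) (p₀ : X → ℝ) (θstar : Θ) (xs : ℕ → X)
    (α c : ℝ) (n : ℕ) (A : Set Θ)
    -- the model: jointly measurable family of probability densities w.r.t. μ
    (hpmeas : Measurable (Function.uncurry p))
    (hpnn : ∀ θ x, 0 ≤ p θ x)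
    (hpint : ∀ θ, Integrable (p θ) μ)
    (hpone : ∀ θ, ∫ x, p θ x ∂μ = 1)
    -- the true density p₀
    (hp₀meas : Measurable p₀) (hp₀nn : ∀ x, 0 ≤ p₀ x)
    (hp₀int : Integrable p₀ μ) (hp₀one : (∫ x, p₀ x ∂μ) = 1)
    (hα0 : 0 < α) (hα1 : α < 1) (hc : 0 ≤ c)
    -- A is measurable and {p_θ : θ ∈ A} is convex and closed in L¹(μ)
    (hA : MeasurableSet A)
    (hconv : ConvexDens μ p A)
    (hclosed : ClosedDens μ p A)
    -- inf_{θ ∈ A} [-log ∫ (p_θ/p*)^α p₀ dμ] ≥ c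
    (hentropy : ∀ θ ∈ A, c ≤ -Real.log (∫ x, (p θ x / p θstar x) ^ α * p₀ x ∂μ))
    -- 0 < ∫_A R_n dΠ < ∞ for the fixed realization xs of X₁, …, X_n
    (hpos : 0 < ∫ θ in A, LR p θstar xs n θ ∂Pri)
    (hint : IntegrableOn (LR p θstar xs n) A Pri) :
    (∃ θ ∈ A, predDens Pri p θstar xs n A =ᵐ[μ] p θ) ∧
      ∫ x, (predDens Pri p θstar xs n A x / p θstar x) ^ α * p₀ x ∂μ ≤ Real.exp (-c) := by
  classical
  set L : Θ → ℝ := LR p θstar xs n with hLdef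
  have hpx : ∀ x, Measurable fun θ => p θ x := fun x =>
    hpmeas.comp (measurable_id.prodMk measurable_const)
  have hpθ : ∀ θ, Measurable (p θ) := fun θ =>
    hpmeas.comp (measurable_const.prodMk measurable_id)
  have hLmeas : Measurable L := by
    show Measurable fun θ => ∏ i ∈ Finset.range n, p θ (xs i) / p θstar (xs i)
    exact Finset.measurable_prod _ fun i _ => (hpx (xs i)).div measurable_const
  have hLnn : ∀ θ, 0 ≤ L θ := fun θ =>
    Finset.prod_nonneg fun i _ => div_nonneg (hpnn _ _) (hpnn _ _)
  have hAne : A.Nonempty := by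
    rcases Set.eq_empty_or_nonempty A with h | h
    · rw [h] at hpos; simp at hpos
    · exact h
  obtain ⟨θ₀, hθ₀A⟩ := hAne
  set Z : ℝ := ∫ θ in A, L θ ∂Pri with hZdef
  have hZpos : 0 < Z := hpos
  -- the weighted (finite) measure `ρ = L · (Pri|_A)` on Θ
  set ρ : Measure Θ := (Pri.restrict A).withDensity fun θ => ENNReal.ofReal (L θ) with hρdef
  have hρuniv : ρ Set.univ = ENNReal.ofReal Z := by
    rw [hρdef, withDensity_apply _ MeasurableSet.univ, Measure.restrict_univ,
      ← ofReal_integral_eq_lintegral_ofReal hint (Eventually.of_forall hLnn)]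
  haveI hρfin : IsFiniteMeasure ρ := ⟨by rw [hρuniv]; exact ENNReal.ofReal_lt_top⟩
  have hρAc : ρ Aᶜ = 0 := by
    rw [hρdef, withDensity_apply _ hA.compl, Measure.restrict_restrict hA.compl,
      Set.compl_inter_self, Measure.restrict_empty, lintegral_zero_measure]
  set q : Θ × X → ℝ := fun z => p z.1 z.2 with hqdef
  have hqmeas : Measurable q := hpmeas
  set pm : Measure (Θ × X) := ρ.prod μ with hpmdef
  have hlint_one : ∀ θ, ∫⁻ x, ‖p θ x‖₊ ∂μ = 1 := by
    intro θ
    have h1 : ∫⁻ x, (‖p θ x‖₊ : ℝ≥0∞) ∂μ = ∫⁻ x, ENNReal.ofReal (p θ x) ∂μ :=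
      lintegral_congr fun x => by rw [← enorm_eq_nnnorm, Real.enorm_eq_ofReal (hpnn θ x)]
    rw [h1, ← ofReal_integral_eq_lintegral_ofReal (hpint θ)
      (Eventually.of_forall (hpnn θ)), hpone θ, ENNReal.ofReal_one]
  have hqint : Integrable q pm := by
    refine ⟨hqmeas.aestronglyMeasurable, ?_⟩
    have hfin : ∫⁻ z, ‖q z‖₊ ∂pm = ρ Set.univ := by
      rw [hpmdef, lintegral_prod (fun z => (‖q z‖₊ : ℝ≥0∞)) hqmeas.enorm.aemeasurable]
      calc ∫⁻ θ, ∫⁻ x, (‖q (θ, x)‖₊ : ℝ≥0∞) ∂μ ∂ρ = ∫⁻ θ, 1 ∂ρ :=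
            lintegral_congr fun θ => hlint_one θ
        _ = ρ Set.univ := lintegral_one
    show (∫⁻ z, (‖q z‖₊ : ℝ≥0∞) ∂pm) < ∞
    rw [hfin]
    exact measure_lt_top ρ _
  set g₀ : X → ℝ := fun x => ∫ θ, p θ x ∂ρ with hg₀def
  have hg₀int : Integrable g₀ μ := hqint.integral_prod_right
  have hpd : ∀ x, predDens Pri p θstar xs n A x = g₀ x / Z := by
    intro x
    have h1 : g₀ x = ∫ θ in A, (L θ).toNNReal • p θ x ∂Pri :=
      integral_withDensity_eq_integral_smul hLmeas.real_toNNReal _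
    have h2 : ∫ θ in A, (L θ).toNNReal • p θ x ∂Pri = ∫ θ in A, p θ x * L θ ∂Pri :=
      integral_congr_ae (Eventually.of_forall fun θ => by
        simp [NNReal.smul_def, Real.coe_toNNReal _ (hLnn θ), mul_comm])
    show (∫ θ in A, p θ x * L θ ∂Pri) / Z = g₀ x / Z
    rw [h1, h2]
  have hpdint : Integrable (predDens Pri p θstar xs n A) μ := by
    rw [show predDens Pri p θstar xs n A = fun x => g₀ x / Z from funext hpd]
    exact hg₀int.div_const Z
  -- the approximation property
  have happrox : ∀ ε > 0, ∃ θ ∈ A,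
      ∫ x, |predDens Pri p θstar xs n A x - p θ x| ∂μ < ε := by
    intro ε hε
    have hε' : (0:ℝ) < Z * ε / 4 := by positivity
    obtain ⟨g, hgood, hgint, herr⟩ := goodKernel_dense ρ μ hqint hε'
    have hgmeas : Measurable g := hgood.measurable
    obtain ⟨ι, _inst, U, h, hU, hhmeas, hhint, huniq, hrep⟩ := hgood
    have hUdisj : Pairwise (Function.onFun Disjoint U) := by
      intro i j hij
      refine Set.disjoint_left.2 fun θ hi hj => ?_
      obtain ⟨i₀, -, hui₀⟩ := huniq θ
      exact hij ((hui₀ i hi).trans (hui₀ j hj).symm)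
    have hUcov : ⋃ i, U i = Set.univ := by
      refine Set.eq_univ_of_forall fun θ => ?_
      obtain ⟨i, hi, -⟩ := huniq θ
      exact Set.mem_iUnion.2 ⟨i, hi⟩
    set E : ℝ≥0∞ := ∫⁻ z, ‖q z - g z‖₊ ∂pm with hEdef
    have hEle : E ≤ ENNReal.ofReal (Z * ε / 4) := by
      have h1 : ENNReal.ofReal (∫ z, |q z - g z| ∂pm)
          = ∫⁻ z, ENNReal.ofReal |q z - g z| ∂pm :=
        ofReal_integral_eq_lintegral_ofReal ((hqint.sub hgint).abs)
          (Eventually.of_forall fun z => abs_nonneg _)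
      have h2 : E = ∫⁻ z, ENNReal.ofReal |q z - g z| ∂pm :=
        lintegral_congr fun z => by rw [← enorm_eq_nnnorm, Real.enorm_eq_ofReal_abs]
      rw [h2, ← h1]
      exact ENNReal.ofReal_le_ofReal herr
    set H : Θ → ℝ≥0∞ := fun σ => ∫⁻ x, ‖q (σ, x) - g (σ, x)‖₊ ∂μ with hHdef
    have hHmeas : Measurable H := (hqmeas.sub hgmeas).enorm.lintegral_prod_right'
    have hHE : ∫⁻ σ, H σ ∂ρ = E := by
      rw [hEdef, hpmdef, lintegral_prod (fun z => (‖q z - g z‖₊ : ℝ≥0∞)) (hqmeas.sub hgmeas).enorm.aemeasurable]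
    set G : ι → Θ → ℝ := fun i σ => ∫ x, |p σ x - h i x| ∂μ with hGdef
    have hGmeas : ∀ i, StronglyMeasurable (G i) := by
      intro i
      have hm : Measurable fun z : Θ × X => |p z.1 z.2 - h i z.2| :=
        (hqmeas.sub ((hhmeas i).comp measurable_snd)).abs
      exact hm.stronglyMeasurable.integral_prod_right'
    have hGnn : ∀ i σ, 0 ≤ G i σ := fun i σ => integral_nonneg fun x => abs_nonneg _
    have hGbd : ∀ i σ, G i σ ≤ 1 + ∫ x, |h i x| ∂μ := by
      intro i σ
      calc G i σ ≤ ∫ x, (p σ x + |h i x|) ∂μ := by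
            refine integral_mono ((hpint σ).sub (hhint i)).abs
              ((hpint σ).add (hhint i).abs) fun x => ?_
            calc |p σ x - h i x| ≤ |p σ x| + |h i x| := abs_sub _ _
              _ = p σ x + |h i x| := by rw [abs_of_nonneg (hpnn σ x)]
        _ = 1 + ∫ x, |h i x| ∂μ := by
            rw [integral_add (hpint σ) (hhint i).abs, hpone σ]
    have hGint : ∀ i, Integrable (G i) ρ := by
      intro i
      refine Integrable.mono' (integrable_const (1 + ∫ x, |h i x| ∂μ))
        (hGmeas i).aestronglyMeasurable (Eventually.of_forall fun σ => ?_)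
      rw [Real.norm_eq_abs, abs_of_nonneg (hGnn i σ)]
      exact hGbd i σ
    have hsel : ∀ i : ι, ∃ σ, σ ∈ A ∧ (ρ (U i) ≠ 0 →
        σ ∈ U i ∧ G i σ * (ρ (U i)).toReal ≤ ∫ σ' in U i, G i σ' ∂ρ) := by
      intro i
      by_cases hUi : ρ (U i) = 0
      · exact ⟨θ₀, hθ₀A, fun hcon => absurd hUi hcon⟩
      · have hne : ρ.restrict (U i) ≠ 0 := by
          rw [Ne, Measure.restrict_eq_zero]; exact hUi
        have hNnull : ρ.restrict (U i) ((U i ∩ A)ᶜ) = 0 := by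
          rw [Measure.restrict_apply ((hU i).inter hA).compl]
          refine measure_mono_null ?_ hρAc
          rintro θ ⟨hθc, hθU⟩ hθA
          exact hθc ⟨hθU, hθA⟩
        obtain ⟨σ, hσN, hσavg⟩ := exists_notMem_null_le_average hne
          ((hGint i).restrict) hNnull
        have hσUA : σ ∈ U i ∩ A := not_not.1 hσN
        refine ⟨σ, hσUA.2, fun _ => ⟨hσUA.1, ?_⟩⟩
        have havg : ⨍ σ', G i σ' ∂(ρ.restrict (U i))
            = (ρ (U i)).toReal⁻¹ * ∫ σ' in U i, G i σ' ∂ρ := by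
          rw [average_eq, measureReal_def, Measure.restrict_apply_univ, smul_eq_mul]
        have hrpos : 0 < (ρ (U i)).toReal :=
          ENNReal.toReal_pos hUi (measure_ne_top ρ _)
        rw [havg] at hσavg
        calc G i σ * (ρ (U i)).toReal
            ≤ ((ρ (U i)).toReal⁻¹ * ∫ σ' in U i, G i σ' ∂ρ) * (ρ (U i)).toReal :=
              mul_le_mul_of_nonneg_right hσavg hrpos.le
          _ = ∫ σ' in U i, G i σ' ∂ρ := by field_simp
    choose θs hθsA hθsP using hsel
    set w : ι → ℝ := fun i => (ρ (U i)).toReal with hwdef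
    have hwnn : ∀ i, 0 ≤ w i := fun i => ENNReal.toReal_nonneg
    have hwsum : ∑ i, w i = Z := by
      have h1 : ∑ i, ρ (U i) = ρ Set.univ := by
        rw [← hUcov, measure_iUnion hUdisj hU, tsum_fintype]
      calc ∑ i, w i = (∑ i, ρ (U i)).toReal :=
            (ENNReal.toReal_sum fun i _ => measure_ne_top ρ _).symm
        _ = (ρ Set.univ).toReal := by rw [h1]
        _ = Z := by rw [hρuniv, ENNReal.toReal_ofReal hZpos.le]
    obtain ⟨θc, hθcA, hθc⟩ := convexDens_sum hconv Finset.univ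
      (w := fun i => w i / Z) (θs := θs) (fun i => div_nonneg (hwnn i) hZpos.le) hθsA
      (by rw [← Finset.sum_div, hwsum, div_self hZpos.ne'])
    -- a.e. pointwise bound
    have hsec : ∀ᵐ x ∂μ, Integrable (fun σ => q (σ, x)) ρ := hqint.prod_left_ae
    have hptws : ∀ᵐ x ∂μ, (‖g₀ x - ∑ i, w i * p (θs i) x‖₊ : ℝ≥0∞)
        ≤ ∑ i, ∫⁻ σ in U i, ‖p σ x - p (θs i) x‖₊ ∂ρ := by
      filter_upwards [hsec] with x hx
      have hx' : Integrable (fun σ => p σ x) ρ := hx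
      have hdecomp : g₀ x = ∑ i, ∫ σ in U i, p σ x ∂ρ := by
        have h2 : ∫ σ in ⋃ i, U i, p σ x ∂ρ = ∑' i, ∫ σ in U i, p σ x ∂ρ :=
          integral_iUnion hU hUdisj (hUcov ▸ hx'.integrableOn)
        calc g₀ x = ∫ σ in Set.univ, p σ x ∂ρ := by rw [setIntegral_univ]
          _ = ∑' i, ∫ σ in U i, p σ x ∂ρ := by rw [← hUcov, h2]
          _ = ∑ i, ∫ σ in U i, p σ x ∂ρ := tsum_fintype _
      have hdiff : g₀ x - ∑ i, w i * p (θs i) x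
          = ∑ i, ∫ σ in U i, (p σ x - p (θs i) x) ∂ρ := by
        rw [hdecomp, ← Finset.sum_sub_distrib]
        refine Finset.sum_congr rfl fun i _ => ?_
        rw [show w i * p (θs i) x = ∫ σ in U i, p (θs i) x ∂ρ by
          rw [setIntegral_const, smul_eq_mul]; rfl]
        exact (integral_sub hx'.integrableOn
          (integrableOn_const (measure_ne_top ρ _))).symm
      rw [hdiff]
      calc (‖∑ i, ∫ σ in U i, (p σ x - p (θs i) x) ∂ρ‖₊ : ℝ≥0∞)
          ≤ ∑ i, (‖∫ σ in U i, (p σ x - p (θs i) x) ∂ρ‖₊ : ℝ≥0∞) := by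
            rw [← ENNReal.coe_finset_sum]
            exact_mod_cast nnnorm_sum_le _ _
        _ ≤ ∑ i, ∫⁻ σ in U i, ‖p σ x - p (θs i) x‖₊ ∂ρ :=
            Finset.sum_le_sum fun i _ => enorm_integral_le_lintegral_enorm _
    have hmeasInner : ∀ i, Measurable fun x =>
        ∫⁻ σ in U i, (‖p σ x - p (θs i) x‖₊ : ℝ≥0∞) ∂ρ := by
      intro i
      have hm : Measurable fun z : X × Θ => (‖p z.2 z.1 - p (θs i) z.1‖₊ : ℝ≥0∞) :=
        ((hqmeas.comp measurable_swap).sub ((hpθ (θs i)).comp measurable_fst)).enorm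
      exact hm.lintegral_prod_right'
    have hstep1 : ∫⁻ x, ‖g₀ x - ∑ i, w i * p (θs i) x‖₊ ∂μ
        ≤ ∑ i, ∫⁻ x, ∫⁻ σ in U i, ‖p σ x - p (θs i) x‖₊ ∂ρ ∂μ := by
      calc ∫⁻ x, ‖g₀ x - ∑ i, w i * p (θs i) x‖₊ ∂μ
          ≤ ∫⁻ x, ∑ i, ∫⁻ σ in U i, ‖p σ x - p (θs i) x‖₊ ∂ρ ∂μ := lintegral_mono_ae hptws
        _ = ∑ i, ∫⁻ x, ∫⁻ σ in U i, ‖p σ x - p (θs i) x‖₊ ∂ρ ∂μ :=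
            lintegral_finset_sum _ fun i _ => hmeasInner i
    have hswap : ∀ i, ∫⁻ x, ∫⁻ σ in U i, ‖p σ x - p (θs i) x‖₊ ∂ρ ∂μ
        = ∫⁻ σ in U i, ∫⁻ x, ‖p σ x - p (θs i) x‖₊ ∂μ ∂ρ := by
      intro i
      exact lintegral_lintegral_swap
        (((hqmeas.comp measurable_swap).sub ((hpθ (θs i)).comp measurable_fst)).enorm).aemeasurable
    set ci : ι → ℝ≥0∞ := fun i => ∫⁻ x, ‖h i x - p (θs i) x‖₊ ∂μ with hcidef
    have htri : ∀ i, ∫⁻ σ in U i, ∫⁻ x, ‖p σ x - p (θs i) x‖₊ ∂μ ∂ρ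
        ≤ (∫⁻ σ in U i, H σ ∂ρ) + ρ (U i) * ci i := by
      intro i
      have hb : ∀ σ ∈ U i, ∫⁻ x, (‖p σ x - p (θs i) x‖₊ : ℝ≥0∞) ∂μ ≤ H σ + ci i := by
        intro σ hσ
        have hgσ : ∀ x, g (σ, x) = h i x := fun x => hrep i σ hσ x
        calc ∫⁻ x, (‖p σ x - p (θs i) x‖₊ : ℝ≥0∞) ∂μ
            ≤ ∫⁻ x, ((‖p σ x - h i x‖₊ : ℝ≥0∞) + ‖h i x - p (θs i) x‖₊) ∂μ := by
              refine lintegral_mono fun x => ?_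
              have h3 : ‖p σ x - p (θs i) x‖₊ ≤ ‖p σ x - h i x‖₊ + ‖h i x - p (θs i) x‖₊ := by
                have := nnnorm_add_le (p σ x - h i x) (h i x - p (θs i) x)
                simpa using this
              calc (‖p σ x - p (θs i) x‖₊ : ℝ≥0∞)
                  ≤ ((‖p σ x - h i x‖₊ + ‖h i x - p (θs i) x‖₊ : ℝ≥0) : ℝ≥0∞) :=
                    ENNReal.coe_le_coe.2 h3
                _ = (‖p σ x - h i x‖₊ : ℝ≥0∞) + ‖h i x - p (θs i) x‖₊ := ENNReal.coe_add _ _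
          _ = (∫⁻ x, (‖p σ x - h i x‖₊ : ℝ≥0∞) ∂μ) + ci i :=
              lintegral_add_left (((hpθ σ).sub (hhmeas i)).enorm) _
          _ = H σ + ci i := by
              congr 1
              exact lintegral_congr fun x => by rw [hgσ x]
      calc ∫⁻ σ in U i, ∫⁻ x, ‖p σ x - p (θs i) x‖₊ ∂μ ∂ρ
          ≤ ∫⁻ σ in U i, (H σ + ci i) ∂ρ :=
            setLIntegral_mono (hHmeas.add measurable_const) hb
        _ = (∫⁻ σ in U i, H σ ∂ρ) + ρ (U i) * ci i := by
            rw [lintegral_add_right _ measurable_const, setLIntegral_const, mul_comm]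
    have hciG : ∀ i, ci i = ENNReal.ofReal (G i (θs i)) := by
      intro i
      calc ci i = ∫⁻ x, ENNReal.ofReal |p (θs i) x - h i x| ∂μ :=
            lintegral_congr fun x => by rw [← enorm_eq_nnnorm, Real.enorm_eq_ofReal_abs, abs_sub_comm]
        _ = ENNReal.ofReal (G i (θs i)) :=
            (ofReal_integral_eq_lintegral_ofReal ((hpint (θs i)).sub (hhint i)).abs
              (Eventually.of_forall fun x => abs_nonneg _)).symm
    have hGH : ∀ i, ∀ σ ∈ U i, ENNReal.ofReal (G i σ) = H σ := by
      intro i σ hσ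
      calc ENNReal.ofReal (G i σ) = ∫⁻ x, ENNReal.ofReal |p σ x - h i x| ∂μ :=
            ofReal_integral_eq_lintegral_ofReal ((hpint σ).sub (hhint i)).abs
              (Eventually.of_forall fun x => abs_nonneg _)
        _ = H σ := lintegral_congr fun x => by
            rw [← Real.enorm_eq_ofReal_abs, enorm_eq_nnnorm]
            congr 1
            rw [show q (σ, x) = p σ x from rfl, hrep i σ hσ x]
    have hDbound : ∀ i, ρ (U i) * ci i ≤ ∫⁻ σ in U i, H σ ∂ρ := by
      intro i
      by_cases hUi : ρ (U i) = 0
      · rw [hUi, zero_mul]; exact zero_le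
      · obtain ⟨hθsU, hθsavg⟩ := hθsP i hUi
        have h1 : ρ (U i) * ci i = ENNReal.ofReal ((ρ (U i)).toReal * G i (θs i)) := by
          conv_lhs => rw [← ENNReal.ofReal_toReal (measure_ne_top ρ (U i))]
          rw [hciG i, ← ENNReal.ofReal_mul ENNReal.toReal_nonneg]
        rw [h1]
        have h2 : (ρ (U i)).toReal * G i (θs i) ≤ ∫ σ' in U i, G i σ' ∂ρ := by
          rw [mul_comm]; exact hθsavg
        calc ENNReal.ofReal ((ρ (U i)).toReal * G i (θs i))
            ≤ ENNReal.ofReal (∫ σ' in U i, G i σ' ∂ρ) := ENNReal.ofReal_le_ofReal h2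
          _ = ∫⁻ σ' in U i, ENNReal.ofReal (G i σ') ∂ρ :=
              ofReal_integral_eq_lintegral_ofReal ((hGint i).restrict)
                (Eventually.of_forall fun σ => hGnn i σ)
          _ = ∫⁻ σ' in U i, H σ' ∂ρ := setLIntegral_congr_fun (hU i)
              (fun σ hσ => hGH i σ hσ)
    have hsumH : ∑ i, ∫⁻ σ in U i, H σ ∂ρ = E := by
      calc ∑ i, ∫⁻ σ in U i, H σ ∂ρ = ∑' i, ∫⁻ σ in U i, H σ ∂ρ := (tsum_fintype _).symm
        _ = ∫⁻ σ in ⋃ i, U i, H σ ∂ρ := (lintegral_iUnion hU hUdisj _).symm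
        _ = ∫⁻ σ, H σ ∂ρ := by rw [hUcov, setLIntegral_univ]
        _ = E := hHE
    have hKEY : ∫⁻ x, ‖g₀ x - ∑ i, w i * p (θs i) x‖₊ ∂μ
        ≤ 2 * ENNReal.ofReal (Z * ε / 4) := by
      calc ∫⁻ x, ‖g₀ x - ∑ i, w i * p (θs i) x‖₊ ∂μ
          ≤ ∑ i, ∫⁻ x, ∫⁻ σ in U i, ‖p σ x - p (θs i) x‖₊ ∂ρ ∂μ := hstep1
        _ = ∑ i, ∫⁻ σ in U i, ∫⁻ x, ‖p σ x - p (θs i) x‖₊ ∂μ ∂ρ :=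
            Finset.sum_congr rfl fun i _ => hswap i
        _ ≤ ∑ i, ((∫⁻ σ in U i, H σ ∂ρ) + ρ (U i) * ci i) :=
            Finset.sum_le_sum fun i _ => htri i
        _ ≤ ∑ i, ((∫⁻ σ in U i, H σ ∂ρ) + ∫⁻ σ in U i, H σ ∂ρ) :=
            Finset.sum_le_sum fun i _ => add_le_add_right (hDbound i) _
        _ = 2 * ∑ i, ∫⁻ σ in U i, H σ ∂ρ := by
            rw [Finset.sum_add_distrib, two_mul]
        _ = 2 * E := by rw [hsumH]
        _ ≤ 2 * ENNReal.ofReal (Z * ε / 4) := mul_le_mul_right hEle 2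
    have hsumint : Integrable (fun x => ∑ i, w i * p (θs i) x) μ :=
      integrable_finset_sum _ fun i _ => ((hpint (θs i)).const_mul (w i))
    have hdiffint : Integrable (fun x => g₀ x - ∑ i, w i * p (θs i) x) μ :=
      hg₀int.sub hsumint
    have hreal : ∫ x, |g₀ x - ∑ i, w i * p (θs i) x| ∂μ ≤ Z * ε / 2 := by
      have h1 : ENNReal.ofReal (∫ x, |g₀ x - ∑ i, w i * p (θs i) x| ∂μ)
          = ∫⁻ x, ‖g₀ x - ∑ i, w i * p (θs i) x‖₊ ∂μ := by
        rw [ofReal_integral_eq_lintegral_ofReal hdiffint.abs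
          (Eventually.of_forall fun x => abs_nonneg _)]
        exact lintegral_congr fun x => by rw [← Real.enorm_eq_ofReal_abs, enorm_eq_nnnorm]
      have h2 : ENNReal.ofReal (∫ x, |g₀ x - ∑ i, w i * p (θs i) x| ∂μ)
          ≤ ENNReal.ofReal (Z * ε / 2) := by
        rw [h1]
        refine hKEY.trans (le_of_eq ?_)
        rw [show ((2:ℝ≥0∞)) = ENNReal.ofReal (2:ℝ) by simp,
          ← ENNReal.ofReal_mul (by norm_num : (0:ℝ) ≤ 2)]
        ring_nf
      exact (ENNReal.ofReal_le_ofReal_iff (by positivity)).1 h2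
    refine ⟨θc, hθcA, ?_⟩
    have heq2 : ∀ x, |g₀ x / Z - ∑ i, (w i / Z) * p (θs i) x|
        = |g₀ x - ∑ i, w i * p (θs i) x| / Z := by
      intro x
      have h3 : g₀ x / Z - ∑ i, (w i / Z) * p (θs i) x
          = (g₀ x - ∑ i, w i * p (θs i) x) / Z := by
        rw [sub_div, Finset.sum_div]
        congr 1
        exact Finset.sum_congr rfl fun i _ => by ring
      rw [h3, abs_div, abs_of_pos hZpos]
    have heq1 : ∫ x, |predDens Pri p θstar xs n A x - p θc x| ∂μ
        = ∫ x, |g₀ x - ∑ i, w i * p (θs i) x| / Z ∂μ := by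
      refine integral_congr_ae ?_
      filter_upwards [hθc] with x hx
      rw [hpd x, ← hx, heq2 x]
    calc ∫ x, |predDens Pri p θstar xs n A x - p θc x| ∂μ
        = ∫ x, |g₀ x - ∑ i, w i * p (θs i) x| / Z ∂μ := heq1
      _ = (∫ x, |g₀ x - ∑ i, w i * p (θs i) x| ∂μ) / Z := integral_div Z _
      _ ≤ (Z * ε / 2) / Z := by
          exact (div_le_div_iff_of_pos_right hZpos).2 hreal
      _ < ε := by
          rw [show (Z * ε / 2) / Z = ε / 2 by field_simp]
          linarith
  obtain ⟨θf, hθfA, hae⟩ := hclosed _ hpdint happrox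
  refine ⟨⟨θf, hθfA, hae⟩, ?_⟩
  have heq : ∫ x, (predDens Pri p θstar xs n A x / p θstar x) ^ α * p₀ x ∂μ
      = ∫ x, (p θf x / p θstar x) ^ α * p₀ x ∂μ := by
    refine integral_congr_ae ?_
    filter_upwards [hae] with x hx
    rw [hx]
  rw [heq]
  have hlog := hentropy θf hθfA
  rcases le_or_gt (∫ x, (p θf x / p θstar x) ^ α * p₀ x ∂μ) 0 with hI | hI
  · exact hI.trans (Real.exp_pos _).le
  · have h1 : Real.log (∫ x, (p θf x / p θstar x) ^ α * p₀ x ∂μ) ≤ -c := by linarith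
    calc (∫ x, (p θf x / p θstar x) ^ α * p₀ x ∂μ)
        = Real.exp (Real.log (∫ x, (p θf x / p θstar x) ^ α * p₀ x ∂μ)) :=
          (Real.exp_log hI).symm
      _ ≤ Real.exp (-c) := Real.exp_le_exp.2 h1

end
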